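/- Let T be an almost-Suslin ω₁-tree. Then ◊_T holds if and only if ◊ holds. -/

import Mathlib

open Set

/-- The first uncountable ordinal `ω₁`. -/
noncomputable def omega1 : Ordinal := Ordinal.omega 1

section TreeDefs

variable {T : Type*} [PartialOrder T]

/-- In a tree, the set of strict predecessors of any node is linearly ordered. -/
def PredsChain (T : Type*) [PartialOrder T] : Prop :=
  ∀ t : T, IsChain (· ≤ ·) {s : T | s < t}

/-- `ht` is *the* height function of the tree: it is strictly monotone on comparable pairs and
the heights of the strict predecessors of `t` are exactly the ordinals below `ht t`; together
with `PredsChain` this says that the set `t↓` of strict predecessors of `t` is well-ordered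
with order type `ht t`. -/
def IsHeightFun (ht : T → Ordinal) : Prop :=
  (∀ s t : T, s < t → ht s < ht t) ∧
  ∀ t : T, ∀ o : Ordinal, o < ht t → ∃ s : T, s < t ∧ ht s = o

/-- The tree has height `ω₁`: every node has height `< ω₁` and every countable ordinal is the
height of some node. -/
def HeightOmega1 (ht : T → Ordinal) : Prop :=
  (∀ t : T, ht t < omega1) ∧ ∀ o : Ordinal, o < omega1 → ∃ t : T, ht t = o

/-- All levels of the tree are countable. -/
def CountableLevels (ht : T → Ordinal) : Prop :=
  ∀ o : Ordinal, {t : T | ht t = o}.Countable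

/-- A tree of height `ω₁` is well-pruned if every node has successors in all later levels. -/
def WellPruned (ht : T → Ordinal) : Prop :=
  ∀ o o' : Ordinal, o < o' → o' < omega1 →
    ∀ s : T, ht s = o → ∃ t : T, s < t ∧ ht t = o'

/-- A special subset of a tree: a union of countably many antichains. -/
def IsSpecialSet (U : Set T) : Prop :=
  ∃ A : ℕ → Set T, (∀ n : ℕ, IsAntichain (· ≤ ·) (A n)) ∧ U ⊆ ⋃ n, A n

/-- Membership in the ideal `NS^T`: there is a regressive map on `B` all of whose fibers
are special. -/
def InNS [OrderBot T] (B : Set T) : Prop :=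
  ∃ f : T → T, (∀ t ∈ B, t ≠ ⊥ → f t < t) ∧
    ∀ t : T, IsSpecialSet {s : T | s ∈ B ∧ f s = t}

/-- The diamond principle `◊_T` for a tree `T`. -/
def DiamondTree (T : Type*) [PartialOrder T] [OrderBot T] : Prop :=
  ∃ D : T → Set T, (∀ t : T, D t ⊆ Set.Iio t) ∧
    ∀ X : Set T, ¬ InNS {t : T | X ∩ Set.Iio t = D t}

end TreeDefs

/-- Club subsets of `ω₁`: closed and unbounded in `ω₁`. -/
def IsClubIn (C : Set Ordinal) : Prop :=
  C ⊆ Set.Iio omega1 ∧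
  (∀ o : Ordinal, o < omega1 → ∃ b ∈ C, o < b) ∧
  ∀ o : Ordinal, o < omega1 → (C ∩ Set.Iio o).Nonempty →
    IsLUB (C ∩ Set.Iio o) o → o ∈ C

/-- Stationary subsets of `ω₁`: sets meeting every club. -/
def IsStationaryIn (S : Set Ordinal) : Prop :=
  ∀ C : Set Ordinal, IsClubIn C → (S ∩ C).Nonempty

/-- The diamond principle `◊(S)` for `S ⊆ ω₁`;  `◊` is `DiamondOn (Set.Iio omega1)`. -/
def DiamondOn (S : Set Ordinal) : Prop :=
  ∃ D : Ordinal → Set Ordinal, (∀ o ∈ S, D o ⊆ Set.Iio o) ∧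
    ∀ X : Set Ordinal, X ⊆ Set.Iio omega1 →
      IsStationaryIn {o ∈ S | X ∩ Set.Iio o = D o}

section Aux

theorem omega1_eq : omega1 = (Cardinal.aleph 1).ord := (Cardinal.ord_aleph 1).symm
theorem lt_omega1_iff {o : Ordinal} : o < omega1 ↔ o.card < Cardinal.aleph 1 := by
  rw [omega1_eq, Cardinal.lt_ord]
theorem nat_sup_lt {f : ℕ → Ordinal} (h : ∀ n, f n < omega1) : iSup f < omega1 := by
  rw [omega1_eq]
  rw [← omega1_eq]; exact Ordinal.iSup_lt_omega_one h
theorem card_le_a0 {o : Ordinal} (h : o < omega1) : o.card ≤ Cardinal.aleph0 := by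
  have := lt_omega1_iff.1 h
  rwa [← Cardinal.succ_aleph0, Order.lt_succ_iff] at this
theorem succ_lt_omega1 {o : Ordinal} (h : o < omega1) : o + 1 < omega1 := by
  rw [lt_omega1_iff, Ordinal.card_add, Ordinal.card_one, ← Cardinal.succ_aleph0,
    Order.lt_succ_iff]
  exact Cardinal.add_le_aleph0.2 ⟨card_le_a0 h, Cardinal.one_le_aleph0⟩
theorem Iio_countable {o : Ordinal} (h : o < omega1) : (Set.Iio o).Countable := by
  apply (Cardinal.countable_iff_lt_aleph_one (Set.Iio o)).2
  rw [Ordinal.mk_Iio_ordinal, Cardinal.lift_lt_aleph_one]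
  exact lt_omega1_iff.1 h

theorem club_Iio : IsClubIn (Set.Iio omega1) :=
  ⟨le_rfl, fun o ho => ⟨o + 1, succ_lt_omega1 ho, lt_add_one o⟩, fun o ho _ _ => ho⟩

theorem stationary_nonempty {S : Set Ordinal} (h : IsStationaryIn S) : S.Nonempty := by
  rcases h _ club_Iio with ⟨x, hx, _⟩; exact ⟨x, hx⟩

theorem stationary_mono {S S' : Set Ordinal} (h : S ⊆ S') (hS : IsStationaryIn S) :
    IsStationaryIn S' := fun C hC => (hS C hC).mono (inter_subset_inter_left _ h)

theorem lub_exceed {s : Set Ordinal} {a x : Ordinal} (h : IsLUB s a) (hx : x < a) :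
    ∃ b ∈ s, x < b := by
  by_contra hcon
  push_neg at hcon
  exact absurd (h.2 hcon) (not_le.2 hx)

/-- A strictly increasing ω-sequence reaching into each club has its sup in each club. -/
theorem sup_mem_clubs {C : ℕ → Set Ordinal} (hC : ∀ n, IsClubIn (C n))
    {b : ℕ → Ordinal} (hlt : ∀ k, b k < b (k + 1)) (hb : ∀ k, b k < omega1)
    (hmem : ∀ n k, ∃ z ∈ C n, b k < z ∧ z ≤ b (k + 1)) : ∀ n, iSup b ∈ C n := by
  intro n
  have hmono : ∀ {i j : ℕ}, i ≤ j → b i ≤ b j := by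
    intro i j hij
    induction j with
    | zero =>
        have : i = 0 := Nat.le_zero.1 hij
        simp [this]
    | succ j ih =>
      rcases Nat.lt_or_ge i (j+1) with h'|h'
      · exact le_of_lt (lt_of_le_of_lt (ih (by omega)) (hlt j))
      · have : i = j + 1 := by omega
        subst this; rfl
  have hs : iSup b < omega1 := nat_sup_lt hb
  have hblt : ∀ k, b k < iSup b := by
    intro k
    exact lt_of_lt_of_le (hlt k) (Ordinal.le_iSup b (k+1))
  apply (hC n).2.2 (iSup b) hs
  · rcases hmem n 0 with ⟨z, hz, _, hz2⟩
    exact ⟨z, hz, lt_of_le_of_lt hz2 (hblt 1)⟩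
  · constructor
    · rintro x ⟨-, hx⟩
      exact le_of_lt hx
    · intro x hx
      apply Ordinal.iSup_le
      intro k
      rcases hmem n k with ⟨z, hz, hz1, hz2⟩
      exact le_trans (le_of_lt hz1) (hx ⟨hz, lt_of_le_of_lt hz2 (hblt (k+1))⟩)

theorem club_iInter_aux {C : ℕ → Set Ordinal} (hC : ∀ n, IsClubIn (C n)) {o : Ordinal}
    (ho : o < omega1) : ∃ b, b ∈ (⋂ n, C n) ∧ o < b ∧ b < omega1 := by
  classical
  -- pick n x : element of C n above x
  choose pick hpick1 hpick2 using fun n x (hx : x < omega1) => (hC n).2.1 x hx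
  -- b 0 = o, b (k+1) = sup over (n,m) pairs of pick n (b k): use pairing
  have key : ∀ x, x < omega1 → ∃ y, x < y ∧ y < omega1 ∧ ∀ n, ∃ z ∈ C n, x < z ∧ z ≤ y := by
    intro x hx
    set f : ℕ → Ordinal := fun n => pick n x hx with hf
    refine ⟨iSup f + 1, ?_, ?_, ?_⟩
    · exact lt_of_lt_of_le (hpick2 0 x hx) (le_trans (Ordinal.le_iSup f 0) (le_of_lt (lt_add_one _)))
    · exact succ_lt_omega1 (nat_sup_lt fun n => (hC n).1 (hpick1 n x hx))
    · intro n
      exact ⟨pick n x hx, hpick1 n x hx, hpick2 n x hx,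
        le_trans (Ordinal.le_iSup f n) (le_of_lt (lt_add_one _))⟩
  choose nxt hnxt1 hnxt2 hnxt3 using key
  -- build the sequence
  let b : ℕ → Ordinal := fun k => Nat.rec o (fun _ x => if h : x < omega1 then nxt x h else 0) k
  have hb : ∀ k, b k < omega1 := by
    intro k
    induction k with
    | zero => exact ho
    | succ k ih => simpa [b, dif_pos ih] using hnxt2 _ ih
  have hbs : ∀ k, b (k + 1) = nxt (b k) (hb k) := fun k => by simp [b, dif_pos (hb k)]
  have hlt : ∀ k, b k < b (k + 1) := fun k => by rw [hbs k]; exact hnxt1 _ (hb k)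
  have hmem : ∀ n k, ∃ z ∈ C n, b k < z ∧ z ≤ b (k + 1) := by
    intro n k
    rw [hbs k]
    exact hnxt3 _ (hb k) n
  refine ⟨iSup b, ?_, ?_, nat_sup_lt hb⟩
  · exact Set.mem_iInter.2 (sup_mem_clubs hC hlt hb hmem)
  · exact lt_of_lt_of_le (hlt 0) (Ordinal.le_iSup b 1)

theorem club_iInter_nat {C : ℕ → Set Ordinal} (hC : ∀ n, IsClubIn (C n)) :
    IsClubIn (⋂ n, C n) := by
  refine ⟨fun x hx => (hC 0).1 (Set.mem_iInter.1 hx 0), ?_, ?_⟩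
  · intro o ho
    rcases club_iInter_aux hC ho with ⟨b, h1, h2, _⟩
    exact ⟨b, h1, h2⟩
  · intro o ho hne hlub
    apply Set.mem_iInter.2
    intro n
    apply (hC n).2.2 o ho
    · rcases hne with ⟨x, hx, hx2⟩
      exact ⟨x, Set.mem_iInter.1 hx n, hx2⟩
    · constructor
      · rintro x ⟨-, hx⟩
        exact le_of_lt hx
      · intro x hx
        apply hlub.2
        rintro y ⟨hy, hy2⟩
        exact hx ⟨Set.mem_iInter.1 hy n, hy2⟩

theorem club_inter {C D : Set Ordinal} (hC : IsClubIn C) (hD : IsClubIn D) :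
    IsClubIn (C ∩ D) := by
  have : C ∩ D = ⋂ n : ℕ, (fun n => if n = 0 then C else D) n := by
    ext x
    simp only [Set.mem_inter_iff, Set.mem_iInter]
    constructor
    · rintro ⟨h1, h2⟩ n
      by_cases hn : n = 0 <;> simp [hn, h1, h2]
    · intro h
      have h0 := h 0
      have h1 := h 1
      simp at h0 h1
      exact ⟨h0, h1⟩
  rw [this]
  apply club_iInter_nat
  intro n
  by_cases hn : n = 0 <;> simp [hn, hC, hD]

theorem not_stationary_iff {S : Set Ordinal} :
    ¬ IsStationaryIn S ↔ ∃ C, IsClubIn C ∧ S ∩ C = ∅ := by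
  unfold IsStationaryIn
  push_neg
  simp [Set.not_nonempty_iff_eq_empty]

/-- a countable union of sets meeting a stationary set: one piece is stationary. -/
theorem stationary_union_nat {S : Set Ordinal} {A : ℕ → Set Ordinal}
    (hS : IsStationaryIn S) (hsub : S ⊆ ⋃ n, A n) : ∃ n, IsStationaryIn (S ∩ A n) := by
  by_contra hcon
  push_neg at hcon
  have hcl : ∀ n, ∃ C, IsClubIn C ∧ (S ∩ A n) ∩ C = ∅ :=
    fun n => not_stationary_iff.1 (hcon n)
  choose C hC hCe using hcl
  rcases hS _ (club_iInter_nat hC) with ⟨x, hxS, hxC⟩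
  rcases Set.mem_iUnion.1 (hsub hxS) with ⟨n, hn⟩
  have : x ∈ (S ∩ A n) ∩ C n := ⟨⟨hxS, hn⟩, Set.mem_iInter.1 hxC n⟩
  rw [hCe n] at this
  exact this

/-- union over a countable index set. -/
theorem stationary_union_countable {ι : Type*} {S : Set Ordinal} {I : Set ι}
    {A : ι → Set Ordinal} (hI : I.Countable) (hS : IsStationaryIn S)
    (hsub : S ⊆ ⋃ i ∈ I, A i) : ∃ i ∈ I, IsStationaryIn (S ∩ A i) := by
  rcases Set.eq_empty_or_nonempty I with hIe | hIn
  · exfalso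
    rcases stationary_nonempty hS with ⟨x, hx⟩
    rcases Set.mem_iUnion₂.1 (hsub hx) with ⟨i, hi, -⟩
    rw [hIe] at hi
    exact hi
  · rcases hI.exists_eq_range hIn with ⟨g, hg⟩
    have hsub' : S ⊆ ⋃ n, A (g n) := by
      intro x hx
      rcases Set.mem_iUnion₂.1 (hsub hx) with ⟨i, hi, hxi⟩
      rw [hg] at hi
      rcases hi with ⟨n, rfl⟩
      exact Set.mem_iUnion.2 ⟨n, hxi⟩
    rcases stationary_union_nat hS hsub' with ⟨n, hn⟩
    exact ⟨g n, by rw [hg]; exact ⟨n, rfl⟩, hn⟩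

/-- intersection of clubs over the set `Iio x`, `x < ω₁`, is a club
    (patching with `Iio omega1` to handle triviality). -/
theorem club_iInter_Iio {x : Ordinal} (hx : x < omega1) {C : Ordinal → Set Ordinal}
    (hC : ∀ γ, γ < x → IsClubIn (C γ)) :
    IsClubIn (Set.Iio omega1 ∩ ⋂ γ ∈ Set.Iio x, C γ) := by
  rcases Set.eq_empty_or_nonempty (Set.Iio x) with he | hne
  · simp only [he]
    simp
    exact club_Iio
  · rcases (Iio_countable hx).exists_eq_range hne with ⟨g, hg⟩
    have hgx : ∀ n, g n < x := by
      intro n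
      have : g n ∈ Set.Iio x := by rw [hg]; exact ⟨n, rfl⟩
      exact this
    have : (⋂ γ ∈ Set.Iio x, C γ) = ⋂ n, C (g n) := by
      ext y
      simp only [Set.mem_iInter]
      constructor
      · intro h n
        exact h (g n) (hgx n)
      · intro h γ hγ
        have : γ ∈ Set.Iio x := hγ
        rw [hg] at this
        rcases this with ⟨n, rfl⟩
        exact h n
    rw [this]
    exact club_inter club_Iio (club_iInter_nat fun n => hC _ (hgx n))

theorem seq_mono {b : ℕ → Ordinal} (hlt : ∀ k, b k < b (k + 1)) {i j : ℕ} (hij : i ≤ j) :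
    b i ≤ b j := by
  induction j with
  | zero =>
    have : i = 0 := Nat.le_zero.1 hij
    simp [this]
  | succ j ih =>
    rcases Nat.lt_or_ge i (j+1) with h'|h'
    · exact le_of_lt (lt_of_le_of_lt (ih (by omega)) (hlt j))
    · have : i = j + 1 := by omega
      subst this; rfl

theorem club_diag {C : Ordinal → Set Ordinal} (hC : ∀ γ, IsClubIn (C γ)) :
    IsClubIn {α | α < omega1 ∧ ∀ γ < α, α ∈ C γ} := by
  classical
  refine ⟨fun x hx => hx.1, ?_, ?_⟩
  · intro o ho
    have key : ∀ x, x < omega1 → ∃ y, x < y ∧ y < omega1 ∧ ∀ γ < x, y ∈ C γ := by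
      intro x hx
      rcases (club_iInter_Iio hx (fun γ _ => hC γ)).2.1 x hx with ⟨y, hy, hxy⟩
      refine ⟨y, hxy, hy.1, ?_⟩
      intro γ hγ
      exact Set.mem_iInter₂.1 hy.2 γ hγ
    have key' : ∀ x, ∃ y, x < omega1 → (x < y ∧ y < omega1 ∧ ∀ γ < x, y ∈ C γ) := by
      intro x
      by_cases hx : x < omega1
      · rcases key x hx with ⟨y, h1, h2, h3⟩
        exact ⟨y, fun _ => ⟨h1, h2, h3⟩⟩
      · exact ⟨0, fun h => absurd h hx⟩
    choose nxt hnxt using key'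
    have ho1 : o + 1 < omega1 := succ_lt_omega1 ho
    let b : ℕ → Ordinal := fun k => nxt^[k] (o + 1)
    have hbs : ∀ k, b (k + 1) = nxt (b k) := fun k => Function.iterate_succ_apply' nxt k (o+1)
    have hb : ∀ k, b k < omega1 := by
      intro k
      induction k with
      | zero => exact ho1
      | succ k ih =>
        rw [hbs k]
        exact (hnxt _ ih).2.1
    have hlt : ∀ k, b k < b (k + 1) := fun k => by rw [hbs k]; exact (hnxt _ (hb k)).1
    have hnxt3 : ∀ k, ∀ γ < b k, b (k+1) ∈ C γ := by
      intro k γ hγ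
      rw [hbs k]
      exact (hnxt _ (hb k)).2.2 γ hγ
    have hblt : ∀ k, b k < iSup b := fun k => lt_of_lt_of_le (hlt k) (Ordinal.le_iSup b (k+1))
    have hs : iSup b < omega1 := nat_sup_lt hb
    refine ⟨iSup b, ⟨hs, ?_⟩, lt_of_lt_of_le (lt_add_one o) (le_trans le_rfl (le_of_lt (hblt 0)))⟩
    intro γ hγ
    -- find k with γ < b k
    have hek : ∃ k, γ < b k := by
      by_contra hcon
      push_neg at hcon
      exact absurd (Ordinal.iSup_le hcon) (not_le.2 hγ)
    rcases hek with ⟨k, hk⟩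
    have hmem : ∀ j, k ≤ j → b (j + 1) ∈ C γ := by
      intro j hj
      exact hnxt3 j γ (lt_of_lt_of_le hk (seq_mono hlt hj))
    apply (hC γ).2.2 _ hs
    · exact ⟨b (k+1), hmem k le_rfl, hblt (k+1)⟩
    · constructor
      · rintro x ⟨-, hx⟩
        exact le_of_lt hx
      · intro x hx
        apply Ordinal.iSup_le
        intro j
        exact le_trans (seq_mono hlt (by omega : j ≤ max j k + 1))
          (hx ⟨hmem (max j k) (le_max_right j k), hblt (max j k + 1)⟩)
  · intro o ho hne hlub
    refine ⟨ho, ?_⟩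
    intro γ hγ
    apply (hC γ).2.2 o ho
    · rcases lub_exceed hlub hγ with ⟨β, hβ, hγβ⟩
      exact ⟨β, hβ.1.2 γ hγβ, hβ.2⟩
    · constructor
      · rintro x ⟨-, hx⟩
        exact le_of_lt hx
      · intro x hx
        by_contra hxo
        push_neg at hxo
        have hm : max x γ < o := max_lt_iff.2 ⟨hxo, hγ⟩
        rcases lub_exceed hlub hm with ⟨β, hβ, hβ2⟩
        have hβC : β ∈ C γ := hβ.1.2 γ (lt_of_le_of_lt (le_max_right x γ) hβ2)
        have : β ≤ x := hx ⟨hβC, hβ.2⟩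
        exact absurd (lt_of_le_of_lt (le_max_left x γ) hβ2) (not_lt.2 this)

theorem fodor {S : Set Ordinal} (hS : IsStationaryIn S)
    {g : Ordinal → Ordinal} (hg : ∀ α ∈ S, g α < α) :
    ∃ γ, IsStationaryIn {α ∈ S | g α = γ} := by
  by_contra hcon
  push_neg at hcon
  have hcl : ∀ γ, ∃ C, IsClubIn C ∧ {α ∈ S | g α = γ} ∩ C = ∅ :=
    fun γ => not_stationary_iff.1 (hcon γ)
  choose C hC hCe using hcl
  rcases hS _ (club_diag hC) with ⟨α, hαS, hα1, hα2⟩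
  have hgα : g α < α := hg α hαS
  have : α ∈ {β ∈ S | g β = g α} ∩ C (g α) := ⟨⟨hαS, rfl⟩, hα2 _ hgα⟩
  rw [hCe (g α)] at this
  exact this

theorem zero_lt_omega1 : (0 : Ordinal) < omega1 := by
  rw [lt_omega1_iff]
  simpa using Cardinal.aleph_pos 1

theorem bdd_of_countable {s : Set Ordinal} (hs : s.Countable) (h : ∀ x ∈ s, x < omega1) :
    ∃ b, b < omega1 ∧ ∀ x ∈ s, x < b := by
  rcases Set.eq_empty_or_nonempty s with he | hne
  · exact ⟨1, by simpa using succ_lt_omega1 zero_lt_omega1, by simp [he]⟩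
  · rcases hs.exists_eq_range hne with ⟨f, hf⟩
    have hfo : ∀ n, f n < omega1 := fun n => h _ (by rw [hf]; exact ⟨n, rfl⟩)
    refine ⟨iSup f + 1, succ_lt_omega1 (nat_sup_lt hfo), ?_⟩
    intro x hx
    rw [hf] at hx
    rcases hx with ⟨n, rfl⟩
    exact lt_of_le_of_lt (Ordinal.le_iSup f n) (lt_add_one _)

theorem club_closure {g : Ordinal → Ordinal} (hg : ∀ o, o < omega1 → g o < omega1) :
    IsClubIn {α | α < omega1 ∧ ∀ ξ < α, g ξ < α} := by
  classical
  refine ⟨fun x hx => hx.1, ?_, ?_⟩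
  · intro o ho
    have key : ∀ x, ∃ y, x < omega1 → (x < y ∧ y < omega1 ∧ ∀ ξ < x, g ξ < y) := by
      intro x
      by_cases hx : x < omega1
      · have himg : (g '' Set.Iio x).Countable := (Iio_countable hx).image g
        have : ∀ z ∈ g '' Set.Iio x, z < omega1 := by
          rintro z ⟨ξ, hξ, rfl⟩
          exact hg ξ (lt_trans hξ hx)
        rcases bdd_of_countable himg this with ⟨b, hb, hb2⟩
        refine ⟨max b (x + 1), fun _ => ⟨lt_of_lt_of_le (lt_add_one x) (le_max_right _ _),
          max_lt hb (succ_lt_omega1 hx), ?_⟩⟩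
        intro ξ hξ
        exact lt_of_lt_of_le (hb2 _ ⟨ξ, hξ, rfl⟩) (le_max_left _ _)
      · exact ⟨0, fun h => absurd h hx⟩
    choose nxt hnxt using key
    let b : ℕ → Ordinal := fun k => nxt^[k] (o + 1)
    have hbs : ∀ k, b (k + 1) = nxt (b k) := fun k => Function.iterate_succ_apply' nxt k (o+1)
    have hb : ∀ k, b k < omega1 := by
      intro k
      induction k with
      | zero => exact succ_lt_omega1 ho
      | succ k ih => rw [hbs k]; exact (hnxt _ ih).2.1
    have hlt : ∀ k, b k < b (k + 1) := fun k => by rw [hbs k]; exact (hnxt _ (hb k)).1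
    have hblt : ∀ k, b k < iSup b := fun k => lt_of_lt_of_le (hlt k) (Ordinal.le_iSup b (k+1))
    have hs : iSup b < omega1 := nat_sup_lt hb
    refine ⟨iSup b, ⟨hs, ?_⟩, lt_of_lt_of_le (lt_add_one o) (le_of_lt (hblt 0))⟩
    intro ξ hξ
    have hek : ∃ k, ξ < b k := by
      by_contra hcon
      push_neg at hcon
      exact absurd (Ordinal.iSup_le hcon) (not_le.2 hξ)
    rcases hek with ⟨k, hk⟩
    have : g ξ < b (k + 1) := by
      rw [hbs k]
      exact (hnxt _ (hb k)).2.2 ξ hk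
    exact lt_trans this (hblt (k+1))
  · intro o ho hne hlub
    refine ⟨ho, ?_⟩
    intro ξ hξ
    rcases lub_exceed hlub hξ with ⟨β, hβ, hξβ⟩
    exact lt_trans (hβ.1.2 ξ hξβ) hβ.2

open Ordinal in
theorem code_lt_omega1 {ξ : Ordinal} (hξ : ξ < omega1) (n : ℕ) : ω * ξ + n < omega1 := by
  rw [lt_omega1_iff, ← Cardinal.succ_aleph0, Order.lt_succ_iff, Ordinal.card_add,
    Ordinal.card_mul]
  apply Cardinal.add_le_aleph0.2
  constructor
  · calc Ordinal.card ω * ξ.card ≤ Cardinal.aleph0 * Cardinal.aleph0 := by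
          apply mul_le_mul'
          · simp
          · exact card_le_a0 hξ
      _ = Cardinal.aleph0 := Cardinal.aleph0_mul_aleph0
  · rw [Ordinal.card_nat]
    exact le_of_lt (Cardinal.nat_lt_aleph0 n)

open Ordinal in
theorem code_lt_succ (ξ : Ordinal) (n : ℕ) : ω * ξ + n < ω * (ξ + 1) := by
  rw [mul_add, mul_one]
  exact add_lt_add_right (Ordinal.nat_lt_omega0 n) _

open Ordinal in
theorem code_mono {ξ ξ' : Ordinal} (h : ξ < ξ') (n n' : ℕ) : ω * ξ + n < ω * ξ' + n' := by
  calc ω * ξ + n < ω * (ξ + 1) := code_lt_succ ξ n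
    _ ≤ ω * ξ' := by
        apply mul_le_mul_right
        rwa [Ordinal.add_one_eq_succ, Order.succ_le_iff]
    _ ≤ ω * ξ' + n' := le_self_add

open Ordinal in
theorem code_inj {ξ ξ' : Ordinal} {n n' : ℕ} (h : ω * ξ + n = ω * ξ' + n') :
    ξ = ξ' ∧ n = n' := by
  rcases lt_trichotomy ξ ξ' with hlt | heq | hgt
  · exact absurd h (ne_of_lt (code_mono hlt n n'))
  · subst heq
    have hnn : (n : Ordinal) = n' := (add_right_inj _).1 h
    exact ⟨rfl, by exact_mod_cast hnn⟩
  · exact absurd h.symm (ne_of_lt (code_mono hgt n' n))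

open Ordinal in
theorem club_code : IsClubIn {α | α < omega1 ∧ ∀ ξ < α, ω * (ξ + 1) < α} := by
  apply club_closure
  intro o ho
  have h0 := code_lt_omega1 (succ_lt_omega1 ho) 0
  simpa using h0

open Ordinal in
theorem code_lt_of_closure {α ξ : Ordinal} (hα : α ∈ {α | α < omega1 ∧ ∀ ξ < α, ω * (ξ + 1) < α})
    (hξ : ξ < α) (n : ℕ) : ω * ξ + n < α :=
  lt_trans (code_lt_succ ξ n) (hα.2 ξ hξ)

section TreeDefs

variable {T : Type*} [PartialOrder T]

variable {ht : T → Ordinal}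

theorem ht_bot [OrderBot T] (hht : IsHeightFun ht) : ht (⊥ : T) = 0 := by
  rcases eq_zero_or_pos (ht (⊥ : T)) with h | h
  · exact h
  · rcases hht.2 ⊥ 0 h with ⟨s, hs, -⟩
    exact absurd hs (not_lt_bot)

theorem ht_pos [OrderBot T] (hht : IsHeightFun ht) {t : T} (h : t ≠ ⊥) : 0 < ht t := by
  have := hht.1 ⊥ t (Ne.bot_lt h)
  rwa [ht_bot hht] at this

theorem level_antichain (hht : IsHeightFun ht) (o : Ordinal) :
    IsAntichain (· ≤ ·) {t : T | ht t = o} := by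
  rintro a ha b hb hab hle
  have h2 := hht.1 a b (lt_of_le_of_ne hle hab)
  rw [show ht a = o from ha, show ht b = o from hb] at h2
  exact lt_irrefl o h2

theorem pred_unique (hchain : PredsChain T) (hht : IsHeightFun ht) {s s' t : T}
    (h1 : s < t) (h2 : s' < t) (h3 : ht s = ht s') : s = s' := by
  rcases eq_or_ne s s' with h | h
  · exact h
  · rcases hchain t h1 h2 h with hle | hle
    · have h4 := hht.1 s s' (lt_of_le_of_ne hle h)
      rw [h3] at h4
      exact absurd h4 (lt_irrefl _)
    · have h4 := hht.1 s' s (lt_of_le_of_ne hle (Ne.symm h))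
      rw [h3] at h4
      exact absurd h4 (lt_irrefl _)

theorem special_of_bdd (hht : IsHeightFun ht) {B : Set T} {δ : Ordinal} (hδ : δ < omega1)
    (h : ∀ t ∈ B, ht t < δ) : IsSpecialSet B := by
  rcases Set.eq_empty_or_nonempty (Set.Iio δ) with he | hne
  · refine ⟨fun _ => ∅, fun n => by simp [IsAntichain], ?_⟩
    intro t htB
    exact absurd (h t htB) (by rw [← Set.mem_Iio, he]; simp)
  · rcases (Iio_countable hδ).exists_eq_range hne with ⟨g, hg⟩
    refine ⟨fun n => {t : T | ht t = g n}, fun n => level_antichain hht _, ?_⟩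
    intro t htB
    have : ht t ∈ Set.Iio δ := h t htB
    rw [hg] at this
    rcases this with ⟨n, hn⟩
    exact Set.mem_iUnion.2 ⟨n, hn.symm⟩

end TreeDefs

section NS

variable {T : Type*} [PartialOrder T] [OrderBot T] {ht : T → Ordinal}

theorem inNS_of_avoids_club (hht : IsHeightFun ht) (hΩ : HeightOmega1 ht)
    {B : Set T} {C : Set Ordinal} (hC : IsClubIn C) (hdisj : ∀ t ∈ B, ht t ∉ C) :
    InNS B := by
  classical
  set f : T → T := fun t =>
    if h : ∃ s, s < t ∧ ht s = sSup (C ∩ Set.Iio (ht t)) then h.choose else ⊥ with hf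
  have key : ∀ t ∈ B, t ≠ ⊥ → f t < t ∧ ht (f t) = sSup (C ∩ Set.Iio (ht t)) := by
    intro t htB htne
    have htpos : 0 < ht t := ht_pos hht htne
    have hex : ∃ s, s < t ∧ ht s = sSup (C ∩ Set.Iio (ht t)) := by
      rcases Set.eq_empty_or_nonempty (C ∩ Set.Iio (ht t)) with he | hne
      · rw [he, csSup_empty]
        rcases hht.2 t 0 htpos with ⟨s, hs1, hs2⟩
        exact ⟨s, hs1, by rw [hs2]; rfl⟩
      · set γ := sSup (C ∩ Set.Iio (ht t)) with hγ
        have hbdd : BddAbove (C ∩ Set.Iio (ht t)) := ⟨ht t, fun x hx => le_of_lt hx.2⟩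
        have hl : IsLUB (C ∩ Set.Iio (ht t)) γ := isLUB_csSup hne hbdd
        have hγle : γ ≤ ht t := hl.2 fun x hx => le_of_lt hx.2
        have hγC : γ ∈ C := by
          by_cases hmem : γ ∈ C ∩ Set.Iio (ht t)
          · exact hmem.1
          · have hE : C ∩ Set.Iio γ = C ∩ Set.Iio (ht t) := by
              ext x
              constructor
              · rintro ⟨h1, h2⟩
                exact ⟨h1, lt_of_lt_of_le h2 hγle⟩
              · rintro ⟨h1, h2⟩
                refine ⟨h1, lt_of_le_of_ne (hl.1 ⟨h1, h2⟩) ?_⟩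
                rintro rfl
                exact hmem ⟨h1, h2⟩
            apply hC.2.2 γ (lt_of_le_of_lt hγle (hΩ.1 t))
            · rw [hE]; exact hne
            · rw [hE]; exact hl
        have hγlt : γ < ht t := by
          rcases lt_or_eq_of_le hγle with h | h
          · exact h
          · exact absurd (h ▸ hγC) (hdisj t htB)
        rcases hht.2 t γ hγlt with ⟨s, hs1, hs2⟩
        exact ⟨s, hs1, hs2⟩
    constructor
    · rw [hf]
      simp only [dif_pos hex]
      exact hex.choose_spec.1
    · rw [hf]
      simp only [dif_pos hex]
      exact hex.choose_spec.2
  refine ⟨f, fun t htB hne => (key t htB hne).1, ?_⟩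
  intro s₀
  have hγ₀ : ht s₀ < omega1 := hΩ.1 s₀
  have hIne : (C ∩ Set.Ioi (ht s₀)).Nonempty := by
    rcases hC.2.1 (ht s₀) hγ₀ with ⟨b, hb1, hb2⟩
    exact ⟨b, hb1, hb2⟩
  set δ := sInf (C ∩ Set.Ioi (ht s₀)) with hδ
  have hδmem : δ ∈ C ∩ Set.Ioi (ht s₀) := csInf_mem hIne
  have hδω : δ < omega1 := hC.1 hδmem.1
  apply special_of_bdd hht hδω
  rintro t ⟨htB, hft⟩
  by_cases htne : t = ⊥
  · subst htne
    rw [ht_bot hht]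
    exact lt_of_le_of_lt (zero_le (a := _)) hδmem.2
  · have hk := key t htB htne
    rw [hft] at hk
    by_contra hcon
    push_neg at hcon
    have hδlt : δ < ht t := lt_of_le_of_ne hcon fun h => hdisj t htB (h ▸ hδmem.1)
    have : δ ≤ ht s₀ := by
      rw [hk.2]
      exact le_csSup ⟨ht t, fun x hx => le_of_lt hx.2⟩ ⟨hδmem.1, hδlt⟩
    exact absurd hδmem.2 (not_lt.2 this)

end NS

theorem club_pos : IsClubIn {α | α < omega1 ∧ 0 < α} := by
  refine ⟨fun x hx => hx.1, ?_, ?_⟩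
  · intro o ho
    exact ⟨o + 1, ⟨succ_lt_omega1 ho, lt_of_le_of_lt (zero_le (a := o)) (lt_add_one o)⟩,
      lt_add_one o⟩
  · intro o ho hne hlub
    rcases hne with ⟨β, hβ1, hβ2⟩
    exact ⟨ho, lt_of_le_of_lt (zero_le (a := β)) hβ2⟩

theorem stationary_inter_club {S C₀ : Set Ordinal} (hS : IsStationaryIn S)
    (hC₀ : IsClubIn C₀) : IsStationaryIn (S ∩ C₀) := by
  intro C hC
  rcases hS _ (club_inter hC₀ hC) with ⟨x, hxS, hx0, hxC⟩
  exact ⟨x, ⟨hxS, hx0⟩, hxC⟩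

section NS2

variable {T : Type*} [PartialOrder T] [OrderBot T] {ht : T → Ordinal}

theorem not_inNS_of_stationary (hht : IsHeightFun ht) (hΩ : HeightOmega1 ht)
    (hlev : CountableLevels ht)
    (has : ∀ A : Set T, IsAntichain (· ≤ ·) A → ¬ IsStationaryIn (ht '' A))
    {B : Set T} (hstat : IsStationaryIn (ht '' B)) : ¬ InNS B := by
  classical
  rintro ⟨f, hreg, hfib⟩
  set tsel : Ordinal → T := fun α => if h : ∃ t, t ∈ B ∧ ht t = α then h.choose else ⊥ with htsel
  have htsel_spec : ∀ α ∈ ht '' B, tsel α ∈ B ∧ ht (tsel α) = α := by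
    rintro α ⟨t, htB, rfl⟩
    have hex : ∃ u, u ∈ B ∧ ht u = ht t := ⟨t, htB, rfl⟩
    rw [htsel]
    simp only [dif_pos hex]
    exact hex.choose_spec
  set g : Ordinal → Ordinal := fun α => ht (f (tsel α)) with hg
  set S' : Set Ordinal := (ht '' B) ∩ {α | α < omega1 ∧ 0 < α} with hS'
  have hS'stat : IsStationaryIn S' := stationary_inter_club hstat club_pos
  have hgreg : ∀ α ∈ S', g α < α := by
    rintro α ⟨hα1, hα2, hα3⟩
    rcases htsel_spec α hα1 with ⟨hm, hh⟩
    have hne : tsel α ≠ ⊥ := by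
      intro hb
      rw [hb, ht_bot hht] at hh
      exact absurd hh.symm (ne_of_gt hα3)
    have := hht.1 _ _ (hreg _ hm hne)
    rwa [hh] at this
  rcases fodor hS'stat hgreg with ⟨γ, hγstat⟩
  set R : Set Ordinal := {α ∈ S' | g α = γ} with hR
  -- γ is the height of f (tsel α) for α ∈ R
  have hRsub : R ⊆ ⋃ s ∈ {u : T | ht u = γ}, {α | f (tsel α) = s} := by
    rintro α ⟨hα1, hα2⟩
    exact Set.mem_iUnion₂.2 ⟨f (tsel α), hα2, rfl⟩
  rcases stationary_union_countable (hlev γ) hγstat hRsub with ⟨s₀, hs₀lev, hs₀stat⟩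
  rcases hfib s₀ with ⟨A, hA, hAsub⟩
  have hsub2 : R ∩ {α | f (tsel α) = s₀} ⊆ ⋃ n, ht '' A n := by
    rintro α ⟨⟨hα1, -⟩, hα2⟩
    rcases htsel_spec α hα1.1 with ⟨hm, hh⟩
    have : tsel α ∈ {s : T | s ∈ B ∧ f s = s₀} := ⟨hm, hα2⟩
    rcases Set.mem_iUnion.1 (hAsub this) with ⟨n, hn⟩
    exact Set.mem_iUnion.2 ⟨n, tsel α, hn, hh⟩
  rcases stationary_union_nat hs₀stat hsub2 with ⟨n, hn⟩
  exact has (A n) (hA n) (stationary_mono (Set.inter_subset_right) hn)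

end NS2


open Ordinal in
theorem stmt18_core {T : Type u_a} [PartialOrder T] [OrderBot T]
    (hchain : PredsChain T) (ht : T → Ordinal.{u_b})
    (hht : IsHeightFun ht) (hΩ : HeightOmega1 ht) (hlev : CountableLevels ht)
    (has : ∀ A : Set T, IsAntichain (· ≤ ·) A → ¬ IsStationaryIn (ht '' A)) :
    DiamondTree T ↔ DiamondOn (Set.Iio omega1.{u_b}) := by
  classical
  -- level enumerations
  have hkey : ∀ α : Ordinal, ∃ e : ℕ → T, α < omega1 → {t : T | ht t = α} = Set.range e := by
    intro α
    by_cases hα : α < omega1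
    · rcases hΩ.2 α hα with ⟨t, htα⟩
      rcases (hlev α).exists_eq_range ⟨t, htα⟩ with ⟨f, hf⟩
      exact ⟨f, fun _ => hf⟩
    · exact ⟨fun _ => ⊥, fun h => absurd h hα⟩
  choose lvl hlvl using hkey
  have hlvl_ht : ∀ α, α < omega1 → ∀ n, ht (lvl α n) = α := by
    intro α hα n
    have : lvl α n ∈ {t : T | ht t = α} := by
      rw [hlvl α hα]
      exact ⟨n, rfl⟩
    exact this
  have hidx' : ∀ t : T, ∃ n, lvl (ht t) n = t := by
    intro t
    have : t ∈ {u : T | ht u = ht t} := rfl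
    rw [hlvl (ht t) (hΩ.1 t)] at this
    rcases this with ⟨n, hn⟩
    exact ⟨n, hn⟩
  choose idx hidx using hidx'
  set e : T → Ordinal := fun t => ω * ht t + idx t with he
  have he_lt : ∀ t, e t < omega1 := fun t => code_lt_omega1 (hΩ.1 t) _
  have he_inj : Function.Injective e := by
    intro t t' h
    rcases code_inj h with ⟨h1, h2⟩
    rw [← hidx t, ← hidx t', h1, h2]
  set Ccl : Set Ordinal := {α | α < omega1 ∧ ∀ ξ < α, ω * (ξ + 1) < α} with hCcl
  constructor
  · -- DiamondTree → Diamond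
    rintro ⟨D, hD1, hD2⟩
    by_contra hcon
    rw [DiamondOn] at hcon
    push_neg at hcon
    -- candidate sequences
    set Dn : ℕ → Ordinal → Set Ordinal :=
      fun n α => {ξ | ξ < α ∧ ∃ s ∈ D (lvl α n), ht s = ω * ξ + n} with hDn
    have hDn1 : ∀ n, ∀ o ∈ Set.Iio omega1, Dn n o ⊆ Set.Iio o := by
      rintro n o - ξ hξ
      exact hξ.1
    have hfail : ∀ n : ℕ, ∃ X, X ⊆ Set.Iio omega1 ∧
        ¬ IsStationaryIn {o ∈ Set.Iio omega1 | X ∩ Set.Iio o = Dn n o} := by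
      intro n
      rcases hcon (Dn n) (hDn1 n) with ⟨X, hX1, hX2⟩
      exact ⟨X, hX1, hX2⟩
    choose X hXsub hXns using hfail
    have hfail2 : ∀ n : ℕ, ∃ C, IsClubIn C ∧
        {o ∈ Set.Iio omega1 | X n ∩ Set.Iio o = Dn n o} ∩ C = ∅ :=
      fun n => not_stationary_iff.1 (hXns n)
    choose C hC hCe using hfail2
    set Y : Set T := {t : T | ∃ ξ : Ordinal, ∃ n : ℕ, ξ ∈ X n ∧ ht t = ω * ξ + n} with hY
    set G : Set T := {t : T | Y ∩ Set.Iio t = D t} with hG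
    have hGns : ¬ InNS G := hD2 Y
    have hGstat : IsStationaryIn (ht '' G) := by
      by_contra hcon2
      rcases not_stationary_iff.1 hcon2 with ⟨C', hC', hC'e⟩
      apply hGns
      apply inNS_of_avoids_club hht hΩ hC'
      intro t htG htC
      have : ht t ∈ (ht '' G) ∩ C' := ⟨⟨t, htG, rfl⟩, htC⟩
      rw [hC'e] at this
      exact this
    rcases hGstat _ (club_inter club_code (club_iInter_nat hC)) with
      ⟨α, ⟨t, htG, rfl⟩, hαcl, hαC⟩
    set n := idx t with hn
    have hlt : lvl (ht t) n = t := hidx t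
    have hmem : ht t ∈ {o ∈ Set.Iio omega1 | X n ∩ Set.Iio o = Dn n o} ∩ C n := by
      refine ⟨⟨hαcl.1, ?_⟩, Set.mem_iInter.1 hαC n⟩
      ext ξ
      constructor
      · rintro ⟨hξX, hξlt⟩
        refine ⟨hξlt, ?_⟩
        have hcode : ω * ξ + n < ht t := code_lt_of_closure hαcl hξlt n
        rcases hht.2 t _ hcode with ⟨s, hs1, hs2⟩
        have hsY : s ∈ Y := ⟨ξ, n, hξX, hs2⟩
        have hsD : s ∈ D t := by
          rw [hG] at htG
          rw [← htG]
          exact ⟨hsY, hs1⟩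
        rw [hlt]
        exact ⟨s, hsD, hs2⟩
      · rintro ⟨hξlt, s, hsD, hs2⟩
        rw [hlt] at hsD
        have hsY : s ∈ Y ∩ Set.Iio t := by
          rw [hG] at htG
          rw [htG]
          exact hsD
        rcases hsY.1 with ⟨ξ', m, hξ'X, hhts⟩
        rw [hs2] at hhts
        rcases code_inj hhts with ⟨h1, h2⟩
        rw [← h1, ← h2] at hξ'X
        exact ⟨hξ'X, hξlt⟩
    rw [hCe n] at hmem
    exact hmem
  · -- Diamond → DiamondTree
    rintro ⟨D, hD1, hD2⟩
    refine ⟨fun t => {s : T | s < t ∧ e s ∈ D (ht t)}, fun t s hs => hs.1, ?_⟩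
    intro XT
    set G : Set T := {t : T | XT ∩ Set.Iio t = {s : T | s < t ∧ e s ∈ D (ht t)}} with hG
    apply not_inNS_of_stationary hht hΩ hlev has
    have hstat : IsStationaryIn ({o ∈ Set.Iio omega1 | (e '' XT) ∩ Set.Iio o = D o} ∩ Ccl) :=
      stationary_inter_club (hD2 (e '' XT) (by rintro x ⟨s, -, rfl⟩; exact he_lt s)) club_code
    apply stationary_mono _ hstat
    rintro α ⟨⟨hα1, hα2⟩, hαcl⟩
    rcases hΩ.2 α hα1 with ⟨t, rfl⟩
    refine ⟨t, ?_, rfl⟩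
    rw [hG]
    show XT ∩ Set.Iio t = {s : T | s < t ∧ e s ∈ D (ht t)}
    ext s
    constructor
    · rintro ⟨hsX, hst⟩
      refine ⟨hst, ?_⟩
      have hes : e s ∈ (e '' XT) ∩ Set.Iio (ht t) :=
        ⟨⟨s, hsX, rfl⟩, code_lt_of_closure hαcl (hht.1 s t hst) _⟩
      rw [hα2] at hes
      exact hes
    · rintro ⟨hst, hes⟩
      refine ⟨?_, hst⟩
      have : e s ∈ (e '' XT) ∩ Set.Iio (ht t) := by
        rw [hα2]
        exact hes
      rcases this.1 with ⟨s', hs'X, hs'e⟩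
      rwa [← he_inj hs'e]

section Transfer

universe u v

theorem lift_omega1 : Ordinal.lift.{v, u} omega1 = omega1 := by
  show Ordinal.lift.{v, u} (Ordinal.omega 1) = Ordinal.omega 1
  rw [Ordinal.lift_omega, Ordinal.lift_one]

theorem lift_lt_omega1 {a : Ordinal.{u}} :
    Ordinal.lift.{v, u} a < omega1 ↔ a < omega1 := by
  rw [← lift_omega1.{u, v}, Ordinal.lift_lt]

theorem down_of_lt_omega1 {b : Ordinal.{max u v}} (h : b < omega1) :
    ∃ a : Ordinal.{u}, Ordinal.lift.{v, u} a = b := by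
  apply Ordinal.mem_range_lift_of_le
  rw [lift_omega1]
  exact le_of_lt h

theorem isLUB_lift {s : Set Ordinal.{u}} {a : Ordinal.{u}} (h : IsLUB s a) :
    IsLUB (Ordinal.lift.{v, u} '' s) (Ordinal.lift.{v, u} a) := by
  constructor
  · rintro x ⟨y, hy, rfl⟩
    exact Ordinal.lift_le.2 (h.1 hy)
  · intro x hx
    rcases le_or_gt (Ordinal.lift.{v,u} a) x with hle | hlt
    · exact hle
    · rcases Ordinal.mem_range_lift_of_le (le_of_lt hlt) with ⟨y, rfl⟩
      exact Ordinal.lift_le.2 (h.2 fun z hz => Ordinal.lift_le.1 (hx ⟨z, hz, rfl⟩))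

theorem club_lift {C : Set Ordinal.{u}} (hC : IsClubIn C) :
    IsClubIn (Ordinal.lift.{v, u} '' C) := by
  refine ⟨?_, ?_, ?_⟩
  · rintro x ⟨a, ha, rfl⟩
    exact lift_lt_omega1.2 (hC.1 ha)
  · intro o ho
    rcases down_of_lt_omega1.{u,v} ho with ⟨a, rfl⟩
    rcases hC.2.1 a (lift_lt_omega1.1 ho) with ⟨b, hb1, hb2⟩
    exact ⟨Ordinal.lift.{v,u} b, ⟨b, hb1, rfl⟩, Ordinal.lift_lt.2 hb2⟩
  · intro o ho hne hlub
    rcases down_of_lt_omega1.{u,v} ho with ⟨a, rfl⟩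
    have hE : Ordinal.lift.{v,u} '' C ∩ Set.Iio (Ordinal.lift.{v,u} a) =
        Ordinal.lift.{v,u} '' (C ∩ Set.Iio a) := by
      ext x
      constructor
      · rintro ⟨⟨y, hy, rfl⟩, hx2⟩
        exact ⟨y, ⟨hy, Ordinal.lift_lt.1 hx2⟩, rfl⟩
      · rintro ⟨y, ⟨hy1, hy2⟩, rfl⟩
        exact ⟨⟨y, hy1, rfl⟩, Ordinal.lift_lt.2 hy2⟩
    rw [hE] at hne hlub
    have hlub' : IsLUB (C ∩ Set.Iio a) a := by
      constructor
      · intro y hy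
        exact Ordinal.lift_le.1 (hlub.1 ⟨y, hy, rfl⟩)
      · intro x hx
        by_contra hlt'
        push_neg at hlt'
        have hub : Ordinal.lift.{v,u} x ∈ upperBounds (Ordinal.lift.{v,u} '' (C ∩ Set.Iio a)) := by
          rintro z ⟨y, hy, rfl⟩
          exact Ordinal.lift_le.2 (hx hy)
        exact absurd (Ordinal.lift_le.1 (hlub.2 hub)) (not_le.2 hlt')
    have hne' : (C ∩ Set.Iio a).Nonempty := by
      rcases hne with ⟨x, y, hy, rfl⟩
      exact ⟨y, hy⟩
    exact ⟨a, hC.2.2 a (lift_lt_omega1.1 ho) hne' hlub', rfl⟩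

theorem club_unlift {C : Set Ordinal.{max u v}} (hC : IsClubIn C) :
    IsClubIn {a : Ordinal.{u} | Ordinal.lift.{v, u} a ∈ C} := by
  have hCr : ∀ b ∈ C, ∃ a : Ordinal.{u}, Ordinal.lift.{v,u} a = b :=
    fun b hb => down_of_lt_omega1.{u,v} (hC.1 hb)
  refine ⟨?_, ?_, ?_⟩
  · intro a ha
    exact lift_lt_omega1.1 (hC.1 ha)
  · intro o ho
    rcases hC.2.1 (Ordinal.lift.{v,u} o) (lift_lt_omega1.2 ho) with ⟨b, hb1, hb2⟩
    rcases hCr b hb1 with ⟨a, rfl⟩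
    exact ⟨a, hb1, Ordinal.lift_lt.1 hb2⟩
  · intro o ho hne hlub
    have hE : C ∩ Set.Iio (Ordinal.lift.{v,u} o) =
        Ordinal.lift.{v,u} '' ({a | Ordinal.lift.{v,u} a ∈ C} ∩ Set.Iio o) := by
      ext x
      constructor
      · rintro ⟨hx1, hx2⟩
        rcases hCr x hx1 with ⟨a, rfl⟩
        exact ⟨a, ⟨hx1, Ordinal.lift_lt.1 hx2⟩, rfl⟩
      · rintro ⟨a, ⟨ha1, ha2⟩, rfl⟩
        exact ⟨ha1, Ordinal.lift_lt.2 ha2⟩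
    show Ordinal.lift.{v,u} o ∈ C
    apply hC.2.2 _ (lift_lt_omega1.2 ho)
    · rw [hE]
      rcases hne with ⟨a, ha⟩
      exact ⟨Ordinal.lift.{v,u} a, a, ha, rfl⟩
    · rw [hE]
      exact isLUB_lift hlub

theorem stationary_lift {S : Set Ordinal.{u}} (hS : IsStationaryIn S) :
    IsStationaryIn (Ordinal.lift.{v, u} '' S) := by
  intro C hC
  rcases hS _ (club_unlift.{u, v} hC) with ⟨a, ha1, ha2⟩
  exact ⟨Ordinal.lift.{v,u} a, ⟨a, ha1, rfl⟩, ha2⟩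

theorem stationary_unlift {S : Set Ordinal.{max u v}} (hS : IsStationaryIn S) :
    IsStationaryIn {a : Ordinal.{u} | Ordinal.lift.{v, u} a ∈ S} := by
  intro C hC
  rcases hS _ (club_lift.{u, v} hC) with ⟨b, hb1, a, ha, rfl⟩
  exact ⟨a, hb1, ha⟩

theorem diamondOn_lift (h : DiamondOn (Set.Iio omega1.{u})) :
    DiamondOn (Set.Iio omega1.{max u v}) := by
  classical
  rcases h with ⟨D, hD1, hD2⟩
  set D' : Ordinal.{max u v} → Set Ordinal.{max u v} := fun b =>
    if h : ∃ a : Ordinal.{u}, Ordinal.lift.{v,u} a = b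
    then Ordinal.lift.{v,u} '' (D h.choose) else ∅ with hD'
  refine ⟨D', ?_, ?_⟩
  · intro o ho
    by_cases h : ∃ a : Ordinal.{u}, Ordinal.lift.{v,u} a = o
    · simp only [hD', dif_pos h]
      rintro x ⟨y, hy, rfl⟩
      have := hD1 h.choose (by rw [Set.mem_Iio, ← lift_lt_omega1.{u,v}, h.choose_spec]; exact ho) hy
      rw [Set.mem_Iio, ← h.choose_spec]
      exact Ordinal.lift_lt.2 this
    · simp only [hD', dif_neg h]
      simp
  · intro X' hX'
    set X : Set Ordinal.{u} := {a | Ordinal.lift.{v,u} a ∈ X'} with hX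
    have hXsub : X ⊆ Set.Iio omega1 := fun a ha => lift_lt_omega1.1 (hX' ha)
    have hstat := hD2 X hXsub
    apply stationary_mono _ (stationary_lift.{u,v} hstat)
    rintro b ⟨a, ⟨ha1, ha2⟩, rfl⟩
    refine ⟨lift_lt_omega1.2 ha1, ?_⟩
    have hex : ∃ a' : Ordinal.{u}, Ordinal.lift.{v,u} a' = Ordinal.lift.{v,u} a := ⟨a, rfl⟩
    simp only [hD', dif_pos hex]
    have hch : hex.choose = a := Ordinal.lift_inj.1 hex.choose_spec
    rw [hch, ← ha2]
    ext x
    constructor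
    · rintro ⟨hx1, hx2⟩
      rcases down_of_lt_omega1.{u,v} (lt_trans hx2 (lift_lt_omega1.2 ha1)) with ⟨y, rfl⟩
      exact ⟨y, ⟨hx1, Ordinal.lift_lt.1 hx2⟩, rfl⟩
    · rintro ⟨y, ⟨hy1, hy2⟩, rfl⟩
      exact ⟨hy1, Ordinal.lift_lt.2 hy2⟩

theorem diamondOn_unlift (h : DiamondOn (Set.Iio omega1.{max u v})) :
    DiamondOn (Set.Iio omega1.{u}) := by
  rcases h with ⟨D', hD'1, hD'2⟩
  refine ⟨fun a => {x | Ordinal.lift.{v,u} x ∈ D' (Ordinal.lift.{v,u} a)}, ?_, ?_⟩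
  · intro o ho x hx
    have := hD'1 (Ordinal.lift.{v,u} o) (lift_lt_omega1.2 ho) hx
    exact Ordinal.lift_lt.1 this
  · intro X hXsub
    have hstat := hD'2 (Ordinal.lift.{v,u} '' X)
      (by rintro b ⟨a, ha, rfl⟩; exact lift_lt_omega1.2 (hXsub ha))
    apply stationary_mono _ (stationary_unlift.{u,v} hstat)
    rintro a ⟨ha1, ha2⟩
    refine ⟨lift_lt_omega1.1 ha1, ?_⟩
    ext x
    constructor
    · rintro ⟨hx1, hx2⟩
      have : Ordinal.lift.{v,u} x ∈ Ordinal.lift.{v,u} '' X ∩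
          Set.Iio (Ordinal.lift.{v,u} a) := ⟨⟨x, hx1, rfl⟩, Ordinal.lift_lt.2 hx2⟩
      rw [ha2] at this
      exact this
    · intro hx1
      have h2 : Ordinal.lift.{v,u} x ∈ D' (Ordinal.lift.{v,u} a) := hx1
      rw [← ha2] at h2
      rcases h2 with ⟨⟨y, hy, hyx⟩, hlt⟩
      have hyx' : y = x := Ordinal.lift_inj.1 hyx
      subst hyx'
      exact ⟨hy, Ordinal.lift_lt.1 hlt⟩

theorem diamondOn_univ_iff :
    DiamondOn (Set.Iio omega1.{u}) ↔ DiamondOn (Set.Iio omega1.{v}) := by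
  constructor
  · intro h
    exact diamondOn_unlift.{v, u} (diamondOn_lift.{u, v} h)
  · intro h
    exact diamondOn_unlift.{u, v} (diamondOn_lift.{v, u} h)

end Transfer


end Aux

/-- Let `T` be an almost-Suslin `ω₁`-tree (the set of heights of every
antichain is nonstationary in `ω₁`). Then `◊_T` holds if and only if `◊` holds. -/
theorem stmt18 {T : Type*} [PartialOrder T] [OrderBot T]
    (hchain : PredsChain T) (ht : T → Ordinal)
    (hht : IsHeightFun ht) (hΩ : HeightOmega1 ht) (hlev : CountableLevels ht)
    (has : ∀ A : Set T, IsAntichain (· ≤ ·) A → ¬ IsStationaryIn (ht '' A)) :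
    DiamondTree T ↔ DiamondOn (Set.Iio omega1) :=
  (stmt18_core hchain ht hht hΩ hlev has).trans diamondOn_univ_iff
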